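/- Suppose in round t the proposer i offers an outcome o ∉ L_t^i and the responder j rejects. Then the new responder's lower set equals the old proposer's lower set: L_{t+1}^j = L_t^i. -/
import Mathlib


def respSize (m : ℕ) : ℕ := m / 2

def propSize (m : ℕ) : ℕ := if m % 2 = 1 then m / 2 else m / 2 - 1

def IsLowSet {α : Type*} (O : Finset α) (r : α → ℕ) (n : ℕ) (L : Finset α) : Prop :=
  L ⊆ O ∧ L.card = n ∧ ∀ a ∈ L, ∀ b ∈ O, b ∉ L → r a < r b

/-- if the proposer `i` offers `o ∉ L_t^i` and the responder rejects,
then the new responder's (agent `i`'s) lower set over `O \ {o}` equals `L_t^i`. -/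
theorem lower_set_unchanged_of_offer_outside {α : Type*} [DecidableEq α]
    (O : Finset α) (r : α → ℕ) (hr : Set.InjOn r O) (o : α) (ho : o ∈ O)
    (Li L' : Finset α)
    (hLi : IsLowSet O r (propSize O.card) Li)
    (hoLi : o ∉ Li)
    (hL' : IsLowSet (O.erase o) r (respSize (O.card - 1)) L') :
    L' = Li := by
  obtain ⟨hL'sub, hL'card, hL'low⟩ := hL'
  obtain ⟨hLisub, hLicard, hLilow⟩ := hLi
  have hm : 1 ≤ O.card := Finset.card_pos.mpr ⟨o, ho⟩
  have hsize : respSize (O.card - 1) = propSize O.card := by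
    unfold respSize propSize
    rcases Nat.even_or_odd O.card with he | hodd
    · have h2 : O.card % 2 = 0 := Nat.even_iff.mp he
      rw [if_neg (by omega)]
      omega
    · have h2 : O.card % 2 = 1 := Nat.odd_iff.mp hodd
      simp only [h2, if_true]
      omega
  have hcard : L'.card = Li.card := by rw [hL'card, hLicard, hsize]
  -- Li is a subset of O.erase o
  have hLie : Li ⊆ O.erase o := fun x hx =>
    Finset.mem_erase.mpr ⟨fun h => hoLi (h ▸ hx), hLisub hx⟩
  have hsub : L' ⊆ Li := by
    intro a ha
    by_contra haLi
    have hne : (Li \ L').Nonempty := by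
      rw [Finset.sdiff_nonempty]
      intro hsub2
      have : Li = L' := Finset.eq_of_subset_of_card_le hsub2 (le_of_eq hcard)
      exact haLi (this ▸ ha)
    obtain ⟨b, hb⟩ := hne
    rw [Finset.mem_sdiff] at hb
    have h1 : r a < r b := hL'low a ha b (hLie hb.1) hb.2
    have h2 : r b < r a := hLilow b hb.1 a (Finset.mem_of_mem_erase (hL'sub ha)) haLi
    omega
  exact Finset.eq_of_subset_of_card_le hsub (le_of_eq hcard.symm)
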